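/- Charge-group of the Verlinde nimrep: for the Verlinde nimrep N_λ of Ver_k(G) (fusion ring R_G/I_k(G) with basis the primaries), any solution (q, M) of the charge equations dim(λ̄) q_x ≡ Σ_y N_{λ,x}^y q_y (mod M) satisfies q_λ = q_1 · dim(λ̄) (mod M), and the universal solution (charge-group) is Z_{M̃} where M̃ = gcd of dim(μ̄) over all μ̄ in the fusion ideal I_k(G); in particular every charge-group of any nimrep of Ver_k(G) is M̃-torsion. -/

import Mathlib

/-!
STATEMENT 13: the charge-group of the Verlinde nimrep.  Abstractly,
`R` plays the role of the representation ring `R_G`, `D : R →+* ℤ` is the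
dimension homomorphism, `I` is the fusion ideal, `Φ` the set of primaries,
`ℓ : Φ → R` the canonical lifts (irreducible characters), so that the classes
`mk (ℓ λ)` form a `ℤ`-basis of the Verlinde ring `R/I`, with fusion
coefficients `N` and vacuum `one`.  `Mt` is the gcd of the dimensions of the
members of the fusion ideal.
-/

open scoped BigOperators

set_option maxHeartbeats 1000000
noncomputable section

lemma aux_main {R : Type} [CommRing R] (D : R →+* ℤ) (I : Ideal R)
    {Φ : Type} [Fintype Φ] [DecidableEq Φ]
    (ℓ : Φ → R) (one : Φ) (hℓone : ℓ one = 1)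
    (hgen : Algebra.adjoin ℤ (Set.range ℓ) = ⊤)
    (hlin : LinearIndependent ℤ (fun lam => Ideal.Quotient.mk I (ℓ lam)))
    (hspan : Submodule.span ℤ (Set.range (fun lam => Ideal.Quotient.mk I (ℓ lam))) = ⊤)
    (N : Φ → Φ → Φ → ℕ)
    (hmulN : ∀ lam mu, Ideal.Quotient.mk I (ℓ lam * ℓ mu)
        = Ideal.Quotient.mk I (∑ nu, N lam mu nu • ℓ nu))
    (B : Type) [Fintype B] [DecidableEq B] (Nm : Φ → Matrix B B ℤ)
    (hNm : ∀ lam mu, Nm lam * Nm mu = ∑ nu, (N lam mu nu : ℤ) • Nm nu)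
    (hNm1 : Nm one = 1)
    (q : B → ℤ) (M : ℤ)
    (hq : ∀ lam x, M ∣ (∑ y, Nm lam x y * q y) - D (ℓ lam) * q x)
    (r : R) (hrI : r ∈ I) :
    ∀ x, M ∣ D r * q x := by
  classical
  set mk := Ideal.Quotient.mk I with hmk
  have hb : Submodule.span ℤ (Set.range (fun lam => mk (ℓ lam))) = ⊤ := hspan
  let b : Module.Basis Φ ℤ (R ⧸ I) := Module.Basis.mk hlin (le_of_eq hb.symm)
  have hbapp : ∀ lam, b lam = mk (ℓ lam) := fun lam => Module.Basis.mk_apply hlin _ lam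
  have hbmul : ∀ lam mu, b lam * b mu = ∑ nu, (N lam mu nu : ℤ) • b nu := by
    intro lam mu
    rw [hbapp, hbapp, ← map_mul, hmulN, map_sum]
    refine Finset.sum_congr rfl fun nu _ => ?_
    rw [hbapp, map_nsmul, Nat.cast_smul_eq_nsmul]
  -- the associated matrix representation of R
  set hat : R → Matrix B B ℤ := fun r => ∑ lam, (b.repr (mk r)) lam • Nm lam with hhat
  have hrepr : ∀ r : R, mk r = ∑ lam, (b.repr (mk r)) lam • b lam := by
    intro r; rw [b.sum_repr (mk r)]
  -- repr of a product
  have hreprmul : ∀ r s : R, (b.repr (mk (r * s))) = fun nu =>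
      ∑ lam, ∑ mu, (b.repr (mk r)) lam * (b.repr (mk s)) mu * (N lam mu nu : ℤ) := by
    intro r s
    have h1 : mk (r * s) = ∑ nu, (∑ lam, ∑ mu,
        (b.repr (mk r)) lam * (b.repr (mk s)) mu * (N lam mu nu : ℤ)) • b nu := by
      have h0 : mk (r * s) = mk r * mk s := by simp [hmk, map_mul]
      rw [h0]
      conv_lhs => rw [hrepr r, hrepr s]
      rw [Finset.sum_mul_sum]
      simp_rw [smul_mul_smul_comm, hbmul, Finset.smul_sum, smul_smul, Finset.sum_smul]
      exact Eq.trans (Finset.sum_congr rfl fun lam _ => Finset.sum_comm) Finset.sum_comm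
    rw [h1, b.repr_sum_self]
  -- hat is multiplicative, additive, sends 1 to 1
  have hatmul : ∀ r s : R, hat (r * s) = hat r * hat s := by
    intro r s
    rw [hhat]
    simp only [hreprmul r s]
    rw [Finset.sum_mul_sum]
    simp_rw [smul_mul_smul_comm, hNm, Finset.smul_sum, smul_smul, Finset.sum_smul]
    exact (Eq.trans (Finset.sum_congr rfl fun lam _ => Finset.sum_comm) Finset.sum_comm).symm
  have hatℓ : ∀ lam, hat (ℓ lam) = Nm lam := by
    intro lam
    rw [hhat]
    have h2 : mk (ℓ lam) = b lam := (hbapp lam).symm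
    simp [h2, Finsupp.single_apply]
  have hatone : hat 1 = 1 := by
    rw [← hℓone, hatℓ, hNm1]
  have hatadd : ∀ r s : R, hat (r + s) = hat r + hat s := by
    intro r s
    rw [hhat]
    simp only [map_add, Finsupp.add_apply, add_smul]
    exact Finset.sum_add_distrib
  have hatsmul : ∀ (n : ℤ) (r : R), hat (n • r) = n • hat r := by
    intro n r
    rw [hhat]
    simp only [map_zsmul, Finsupp.smul_apply, smul_eq_mul, mul_smul]
    rw [← Finset.smul_sum]
  have hatint : ∀ n : ℤ, hat ((n : ℤ) : R) = n • (1 : Matrix B B ℤ) := by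
    intro n
    have : ((n : ℤ) : R) = n • (1 : R) := by simp
    rw [this, hatsmul, hatone]
  -- the key claim, by induction over the generators
  have key : ∀ r : R, ∀ x, M ∣ (∑ y, hat r x y * q y) - D r * q x := by
    intro r
    have hmem : r ∈ Algebra.adjoin ℤ (Set.range ℓ) := by rw [hgen]; trivial
    induction hmem using Algebra.adjoin_induction with
    | mem u hu =>
      obtain ⟨lam, rfl⟩ := hu
      intro x
      rw [hatℓ]
      exact hq lam x
    | algebraMap n =>
      intro x
      have hD : D ((n : ℤ) : R) = n := by simp
      have h1 : (algebraMap ℤ R n : R) = ((n : ℤ) : R) := by simp [algebraMap_int_eq]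
      rw [h1, hatint, hD]
      have h2 : ∑ y, (n • (1 : Matrix B B ℤ)) x y * q y = n * q x := by
        simp [Matrix.smul_apply, Matrix.one_apply, ite_smul, mul_ite, Finset.sum_ite_eq]
      rw [h2, sub_self]
      exact dvd_zero M
    | add u v hu hv ihu ihv =>
      intro x
      have h1 : (∑ y, hat (u + v) x y * q y) - D (u + v) * q x
          = ((∑ y, hat u x y * q y) - D u * q x) + ((∑ y, hat v x y * q y) - D v * q x) := by
        rw [hatadd, map_add]
        simp only [Matrix.add_apply, add_mul]
        rw [Finset.sum_add_distrib]
        ring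
      rw [h1]
      exact dvd_add (ihu x) (ihv x)
    | mul u v hu hv ihu ihv =>
      intro x
      have hc : hat (u * v) = hat v * hat u := by
        rw [mul_comm u v]; exact hatmul v u
      have e1 : ∑ w, hat (u * v) x w * q w
          = ∑ z, hat v x z * (∑ w, hat u z w * q w) := by
        rw [hc]
        simp only [Matrix.mul_apply, Finset.sum_mul, Finset.mul_sum, mul_assoc]
        exact Finset.sum_comm
      have h1 : M ∣ ∑ z, hat v x z * ((∑ w, hat u z w * q w) - D u * q z) :=
        Finset.dvd_sum fun z _ => Dvd.dvd.mul_left (ihu z) _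
      have h2 : M ∣ D u * ((∑ z, hat v x z * q z) - D v * q x) :=
        Dvd.dvd.mul_left (ihv x) _
      have e2 : (∑ w, hat (u * v) x w * q w) - D (u * v) * q x
          = (∑ z, hat v x z * ((∑ w, hat u z w * q w) - D u * q z))
            + D u * ((∑ z, hat v x z * q z) - D v * q x) := by
        rw [e1, map_mul]
        have h3 : ∑ z, hat v x z * (D u * q z) = D u * ∑ z, hat v x z * q z := by
          rw [Finset.mul_sum]
          exact Finset.sum_congr rfl fun z _ => by ring
        simp only [mul_sub, Finset.sum_sub_distrib, h3]
        ring
      rw [e2]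
      exact dvd_add h1 h2
  -- hat vanishes on the ideal
  have hat0 : hat r = 0 := by
    rw [hhat]
    have h1 : mk r = 0 := Ideal.Quotient.eq_zero_iff_mem.mpr hrI
    simp [h1]
  intro x
  have := key r x
  rw [hat0] at this
  simpa using this



lemma aux_assoc {R : Type} [CommRing R] (I : Ideal R)
    {Φ : Type} [Fintype Φ] [DecidableEq Φ]
    (ℓ : Φ → R)
    (hlin : LinearIndependent ℤ (fun lam => Ideal.Quotient.mk I (ℓ lam)))
    (hspan : Submodule.span ℤ (Set.range (fun lam => Ideal.Quotient.mk I (ℓ lam))) = ⊤)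
    (N : Φ → Φ → Φ → ℕ)
    (hmulN : ∀ lam mu, Ideal.Quotient.mk I (ℓ lam * ℓ mu)
        = Ideal.Quotient.mk I (∑ nu, N lam mu nu • ℓ nu))
    (hNcomm : ∀ lam mu nu, N lam mu nu = N mu lam nu)
    (lam mu x y : Φ) :
    ∑ z, (N lam x z : ℤ) * N mu z y = ∑ nu, (N lam mu nu : ℤ) * N nu x y := by
  classical
  set mk := Ideal.Quotient.mk I with hmk
  have hb : Submodule.span ℤ (Set.range (fun lam => mk (ℓ lam))) = ⊤ := hspan
  let b : Module.Basis Φ ℤ (R ⧸ I) := Module.Basis.mk hlin (le_of_eq hb.symm)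
  have hbapp : ∀ lam, b lam = mk (ℓ lam) := fun lam => Module.Basis.mk_apply hlin _ lam
  have hbmul : ∀ lam mu, b lam * b mu = ∑ nu, (N lam mu nu : ℤ) • b nu := by
    intro lam mu
    rw [hbapp, hbapp, ← map_mul, hmulN, map_sum]
    refine Finset.sum_congr rfl fun nu _ => ?_
    rw [hbapp, map_nsmul, Nat.cast_smul_eq_nsmul]
  have expand : ∀ al be ga : Φ, mk (ℓ ga * (ℓ al * ℓ be))
      = ∑ w, (∑ z, (N al be z : ℤ) * N ga z w) • b w := by
    intro al be ga
    have s1 : mk (ℓ al * ℓ be) = ∑ z, (N al be z : ℤ) • b z := by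
      rw [map_mul, ← hbapp, ← hbapp, hbmul]
    rw [map_mul, s1, ← hbapp ga, Finset.mul_sum]
    simp_rw [mul_smul_comm, hbmul, Finset.smul_sum, smul_smul, Finset.sum_smul]
    exact Finset.sum_comm
  have h1 := expand lam x mu
  have h2 := expand lam mu x
  have h3 : ℓ mu * (ℓ lam * ℓ x) = ℓ x * (ℓ lam * ℓ mu) := by ring
  rw [h3, h2] at h1
  have h4 := congrFun ((b.repr_sum_self _).symm.trans (by rw [← h1, b.repr_sum_self])) y
  rw [h4]
  exact Finset.sum_congr rfl fun nu _ => by rw [hNcomm x nu]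


theorem stmt_13 {R : Type} [CommRing R] (D : R →+* ℤ) (I : Ideal R)
    {Φ : Type} [Fintype Φ] [DecidableEq Φ]
    (ℓ : Φ → R) (one : Φ)
    (hℓone : ℓ one = 1)
    -- `R` is generated as a ring by the lifts of the primaries
    (hgen : Algebra.adjoin ℤ (Set.range ℓ) = ⊤)
    -- the classes of the `ℓ λ` form a `ℤ`-basis of `R/I`
    (hlin : LinearIndependent ℤ (fun lam => Ideal.Quotient.mk I (ℓ lam)))
    (hspan : Submodule.span ℤ (Set.range (fun lam => Ideal.Quotient.mk I (ℓ lam))) = ⊤)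
    -- the fusion coefficients
    (N : Φ → Φ → Φ → ℕ)
    (hmulN : ∀ lam mu, Ideal.Quotient.mk I (ℓ lam * ℓ mu)
        = Ideal.Quotient.mk I (∑ nu, N lam mu nu • ℓ nu))
    (hNone : ∀ lam mu, N one lam mu = if lam = mu then 1 else 0)
    (hNcomm : ∀ lam mu nu, N lam mu nu = N mu lam nu)
    -- `Mt` is the gcd of the dimensions of the weights in the fusion ideal
    (Mt : ℕ)
    (hMt : {z : ℤ | ∃ x ∈ I, D x = z} = {z : ℤ | (Mt : ℤ) ∣ z}) :
    -- (a) any solution of the charge equations for the Verlinde nimrep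
    --     satisfies `q_λ = q_1 · dim(λ)`
    (∀ (q : Φ → ℤ) (M : ℤ),
      (∀ lam x, D (ℓ lam) * q x ≡ ∑ y, (N lam x y : ℤ) * q y [ZMOD M]) →
      ∀ lam, q lam ≡ q one * D (ℓ lam) [ZMOD M]) ∧
    -- (b) the dimension assignment solves the charge equations mod `Mt`
    (∀ lam x, D (ℓ lam) * D (ℓ x)
        ≡ ∑ y, (N lam x y : ℤ) * D (ℓ y) [ZMOD (Mt : ℤ)]) ∧
    -- (c) `Mt` is the largest such modulus: the charge-group of the Verlinde
    --     nimrep is `ℤ_{Mt}`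
    (∀ M : ℤ,
      (∀ lam x, D (ℓ lam) * D (ℓ x)
          ≡ ∑ y, (N lam x y : ℤ) * D (ℓ y) [ZMOD M]) → M ∣ (Mt : ℤ)) ∧
    -- (d) the charge-group of ANY nimrep of this fusion ring is `Mt`-torsion
    (∀ (B : Type) [Fintype B] [DecidableEq B] (Nm : Φ → Matrix B B ℕ),
      (∀ lam mu, Nm lam * Nm mu = ∑ nu, N lam mu nu • Nm nu) →
      Nm one = 1 →
      ∀ (q : B → ℤ) (M : ℤ),
        (∀ lam x, D (ℓ lam) * q x ≡ ∑ y, (Nm lam x y : ℤ) * q y [ZMOD M]) →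
        ∀ x, M ∣ (Mt : ℤ) * q x) := by
  classical
  -- get an element of the ideal with dimension `Mt`
  have hMtmem : ((Mt : ℤ)) ∈ {z : ℤ | ∃ x ∈ I, D x = z} := by
    rw [hMt]; exact dvd_refl _
  obtain ⟨x0, hx0I, hx0D⟩ := hMtmem
  have hDone : D (ℓ one) = 1 := by rw [hℓone, map_one]
  -- the torsion statement (d), proved first
  have partd : ∀ (B : Type) [Fintype B] [DecidableEq B] (Nm : Φ → Matrix B B ℕ),
      (∀ lam mu, Nm lam * Nm mu = ∑ nu, N lam mu nu • Nm nu) →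
      Nm one = 1 →
      ∀ (q : B → ℤ) (M : ℤ),
        (∀ lam x, D (ℓ lam) * q x ≡ ∑ y, (Nm lam x y : ℤ) * q y [ZMOD M]) →
        ∀ x, M ∣ (Mt : ℤ) * q x := by
    intro B _ _ Nm hNmmul hNm1 q M hq x
    set Nm' : Φ → Matrix B B ℤ := fun lam => (Nm lam).map (Nat.cast : ℕ → ℤ) with hNm'
    have hNm'mul : ∀ lam mu, Nm' lam * Nm' mu = ∑ nu, (N lam mu nu : ℤ) • Nm' nu := by
      intro lam mu
      ext u v
      have h0 : ∑ w, Nm lam u w * Nm mu w v = ∑ nu, N lam mu nu * Nm nu u v := by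
        have := congrArg (fun m : Matrix B B ℕ => m u v) (hNmmul lam mu)
        simpa only [Matrix.mul_apply, Matrix.sum_apply, Matrix.smul_apply, smul_eq_mul]
          using this
      simp only [hNm', Matrix.mul_apply, Matrix.map_apply, Matrix.sum_apply,
        Matrix.smul_apply, smul_eq_mul]
      exact_mod_cast h0
    have hNm'1 : Nm' one = 1 := by
      ext u v
      simp [hNm', Matrix.map_apply, hNm1, Matrix.one_apply, apply_ite (Nat.cast : ℕ → ℤ)]
    have hq' : ∀ lam x, M ∣ (∑ y, Nm' lam x y * q y) - D (ℓ lam) * q x := by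
      intro lam x
      have := (hq lam x).dvd
      simpa [hNm', Matrix.map_apply] using this
    have := aux_main D I ℓ one hℓone hgen hlin hspan N hmulN B Nm' hNm'mul hNm'1 q M hq' x0 hx0I x
    rwa [hx0D] at this
  refine ⟨?_, ?_, ?_, partd⟩
  · -- (a)
    intro q M hq lam
    have h : ∑ y, (N lam one y : ℤ) * q y = q lam := by
      have e : ∀ y, (N lam one y : ℤ) = if lam = y then 1 else 0 := by
        intro y; rw [hNcomm lam one y, hNone]; simp
      simp [e]
    have := hq lam one
    rw [h] at this
    rw [mul_comm]
    exact this.symm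
  · -- (b)
    intro lam x
    have hmem : ℓ lam * ℓ x - ∑ nu, N lam x nu • ℓ nu ∈ I := by
      rw [← Ideal.Quotient.eq]
      exact hmulN lam x
    have hdvd : (Mt : ℤ) ∣ D (ℓ lam * ℓ x - ∑ nu, N lam x nu • ℓ nu) := by
      have : D (ℓ lam * ℓ x - ∑ nu, N lam x nu • ℓ nu) ∈ {z : ℤ | ∃ x ∈ I, D x = z} :=
        ⟨_, hmem, rfl⟩
      rwa [hMt] at this
    have hDval : D (ℓ lam * ℓ x - ∑ nu, N lam x nu • ℓ nu)
        = D (ℓ lam) * D (ℓ x) - ∑ y, (N lam x y : ℤ) * D (ℓ y) := by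
      rw [map_sub, map_mul, map_sum]
      congr 1
      exact Finset.sum_congr rfl fun y _ => by
        rw [map_nsmul]; simp [nsmul_eq_mul]
    rw [hDval] at hdvd
    rw [Int.modEq_iff_dvd]
    have := dvd_neg.mpr hdvd
    rwa [neg_sub] at this
  · -- (c)
    intro M hM
    set Nmat : Φ → Matrix Φ Φ ℕ := fun lam => Matrix.of (fun x y => N lam x y) with hNmat
    have hNmatmul : ∀ lam mu, Nmat lam * Nmat mu = ∑ nu, N lam mu nu • Nmat nu := by
      intro lam mu
      ext u v
      have := aux_assoc I ℓ hlin hspan N hmulN hNcomm lam mu u v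
      have h2 : ((Nmat lam * Nmat mu) u v : ℤ) = ((∑ nu, N lam mu nu • Nmat nu) u v : ℤ) := by
        simp only [hNmat, Matrix.mul_apply, Matrix.sum_apply, Matrix.smul_apply, smul_eq_mul,
          Matrix.of_apply, Nat.cast_sum, Nat.cast_mul]
        exact this
      exact_mod_cast h2
    have hNmat1 : Nmat one = 1 := by
      ext u v
      simp [hNmat, hNone, Matrix.one_apply]
    have hq : ∀ lam x, D (ℓ lam) * D (ℓ x) ≡ ∑ y, ((Nmat lam x y : ℕ) : ℤ) * D (ℓ y) [ZMOD M] := by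
      intro lam x
      simpa [hNmat] using hM lam x
    have := partd Φ Nmat hNmatmul hNmat1 (fun x => D (ℓ x)) M hq one
    rwa [hDone, mul_one] at this


end
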